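/- Every stable matching is popular: if M is a matching in a graph G with strict preferences over neighbors at every node such that no edge of G blocks M (i.e., no edge uv outside M with both u preferring v to M(u) and v preferring u to M(v), where being matched is preferred to being unmatched), then no matching M' is preferred by strictly more nodes than the number of nodes preferring M. -/

import Mathlib

open Finset
open scoped Classical

noncomputable section

/-- A (partial) matching on a graph, given as a symmetric partner function. -/
def IsMatchingOn {W : Type*} (H : SimpleGraph W) (f : W → Option W) : Prop :=
  (∀ v w, f v = some w → f w = some v) ∧ (∀ v w, f v = some w → H.Adj v w)

/-- Number of matched vertices of a partner function. -/
def msize {W : Type*} [Fintype W] (f : W → Option W) : ℕ :=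
  (Finset.univ.filter (fun x => f x ≠ none)).card

/-- f is a maximum-size matching on H. -/
def MaxMatchingOn {W : Type*} [Fintype W] (H : SimpleGraph W) (f : W → Option W) : Prop :=
  IsMatchingOn H f ∧ ∀ g, IsMatchingOn H g → msize g ≤ msize f

variable {V : Type*} [Fintype V] [DecidableEq V]

/-- Rank of a situation (partner or unmatched); smaller is better, being
unmatched is worst (any neighbor is preferred to being unmatched). -/
def rkv (rank : V → V → ℕ) (v : V) : Option V → WithTop ℕ
  | none => ⊤
  | some w => (rank v w : WithTop ℕ)

/-- vote of v comparing situation s to situation t: +1 if v prefers s, -1 if v prefers t. -/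
def vote (rank : V → V → ℕ) (v : V) (s t : Option V) : ℤ :=
  if rkv rank v s < rkv rank v t then 1 else if rkv rank v t < rkv rank v s then -1 else 0

variable (G : SimpleGraph V) (rank : V → V → ℕ)

/-- The preferences are strict (a linear order) on the neighbors of each node. -/
def StrictPrefs : Prop := ∀ u v w, G.Adj u v → G.Adj u w → rank u v = rank u w → v = w

/-- g is more popular than f : strictly more nodes prefer g than prefer f. -/
def MorePopular (g f : V → Option V) : Prop :=
  (Finset.univ.filter (fun v => rkv rank v (g v) < rkv rank v (f v))).card >
  (Finset.univ.filter (fun v => rkv rank v (f v) < rkv rank v (g v))).card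

/-- f is popular: no matching is more popular than f. -/
def PopularM (f : V → Option V) : Prop :=
  ∀ g, IsMatchingOn G g → ¬ MorePopular rank g f

/-- uv is a blocking edge for matching f. -/
def BlockingEdge (f : V → Option V) (u v : V) : Prop :=
  G.Adj u v ∧ f u ≠ some v ∧
    rkv rank u (some v) < rkv rank u (f u) ∧ rkv rank v (some u) < rkv rank v (f v)

/-- Vote based weight of an edge uv. -/
def wE (f : V → Option V) (u v : V) : ℤ :=
  vote rank u (some v) (f u) + vote rank v (some u) (f v)

/-- Vote based weight of the loop at u. -/
def wL (f : V → Option V) (u : V) : ℤ := if f u = none then 0 else -1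

/-- G_M : G minus the edges of weight -2. -/
def GMgraph (f : V → Option V) : SimpleGraph V where
  Adj u v := G.Adj u v ∧ wE rank f u v ≠ -2
  symm := by
    constructor
    intro u v h
    refine ⟨h.1.symm, ?_⟩
    have h2 := h.2
    simp only [wE] at h2 ⊢
    omega
  loopless := ⟨fun v h => G.irrefl h.1⟩

/-- An M-alternating path p 0, p 1, ..., p n (n edges) in graph H with matching f. -/
def AltPath {W : Type*} (H : SimpleGraph W) (f : W → Option W) (p : ℕ → W) (n : ℕ) : Prop :=
  (∀ i j, i ≤ n → j ≤ n → p i = p j → i = j) ∧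
  (∀ i, i < n → H.Adj (p i) (p (i + 1))) ∧
  (∀ i, i + 1 < n → (f (p i) = some (p (i + 1)) ↔ ¬ f (p (i + 1)) = some (p (i + 2))))

/-- An M-alternating cycle p 0, ..., p n = p 0 (n edges, n even), with
matching edges at odd positions. -/
def AltCycle {W : Type*} (H : SimpleGraph W) (f : W → Option W) (p : ℕ → W) (n : ℕ) : Prop :=
  4 ≤ n ∧ Even n ∧ p n = p 0 ∧ (∀ i j, i < n → j < n → p i = p j → i = j) ∧
  (∀ i, i < n → H.Adj (p i) (p (i + 1))) ∧
  (∀ i, i < n → (f (p i) = some (p (i + 1)) ↔ Odd i))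

/-- Blocking structure (i): an alternating cycle in G_M with a blocking edge. -/
def StructI (f : V → Option V) : Prop :=
  ∃ (p : ℕ → V) (n : ℕ), AltCycle (GMgraph G rank f) f p n ∧
    ∃ i, i < n ∧ BlockingEdge G rank f (p i) (p (i + 1))

/-- Blocking structure (ii): an alternating path in G_M whose first and last
edges are two disjoint blocking edges. -/
def StructII (f : V → Option V) : Prop :=
  ∃ (p : ℕ → V) (n : ℕ), 3 ≤ n ∧ AltPath (GMgraph G rank f) f p n ∧
    BlockingEdge G rank f (p 0) (p 1) ∧ BlockingEdge G rank f (p (n - 1)) (p n)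

/-- Blocking structure (iii): an alternating path in G_M from an unmatched node
ending in a blocking edge. -/
def StructIII (f : V → Option V) : Prop :=
  ∃ (p : ℕ → V) (n : ℕ), 1 ≤ n ∧ AltPath (GMgraph G rank f) f p n ∧ f (p 0) = none ∧
    BlockingEdge G rank f (p (n - 1)) (p n)

/-- Vertex set of the auxiliary graph G_M^* : original nodes, blocking nodes b_v,
star nodes b_S (indexed by the middle node of the star), and the contracted node u. -/
abbrev Vstar (V : Type*) := V ⊕ V ⊕ V ⊕ Unit

def origV : V → Vstar V := Sum.inl
def bNodeV : V → Vstar V := fun v => Sum.inr (Sum.inl v)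
def sNodeV : V → Vstar V := fun v => Sum.inr (Sum.inr (Sum.inl v))
def uNode : Vstar V := Sum.inr (Sum.inr (Sum.inr ()))

/-- v is an endpoint of some blocking edge. -/
def IsBlockEnd (f : V → Option V) (v : V) : Prop := ∃ w, BlockingEdge G rank f v w

/-- v is a leaf node: incident to exactly one blocking edge. -/
def IsLeafNode (f : V → Option V) (v : V) : Prop := ∃! w, BlockingEdge G rank f v w

/-- v is a leaf of a star: a leaf node whose unique blocking neighbor z also has
another leaf node attached by a blocking edge. -/
def IsStarLeaf (f : V → Option V) (v : V) : Prop :=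
  IsLeafNode G rank f v ∧ ∃ z, BlockingEdge G rank f v z ∧
    ∃ v', v' ≠ v ∧ IsLeafNode G rank f v' ∧ BlockingEdge G rank f v' z

/-- The (unique) blocking neighbor of a leaf node. -/
def midOf (f : V → Option V) (v : V) : V :=
  if h : ∃ z, BlockingEdge G rank f v z then h.choose else v

/-- b(v): the auxiliary unmatched node attached to the blocking-edge endpoint v. -/
def bmap (f : V → Option V) (v : V) : Vstar V :=
  if IsStarLeaf G rank f v then sNodeV (midOf G rank f v) else bNodeV v

/-- Projection of an original node into G_M^*: unmatched nodes are contracted to u. -/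
def projV (f : V → Option V) (v : V) : Vstar V :=
  if f v = none then uNode else origV v

/-- Underlying (asymmetric) edge description of G_M^*. -/
def starRel (f : V → Option V) (x y : Vstar V) : Prop :=
  (∃ v w, (GMgraph G rank f).Adj v w ∧ ¬ BlockingEdge G rank f v w ∧
    x = projV f v ∧ y = projV f w) ∨
  (∃ v, IsBlockEnd G rank f v ∧ x = projV f v ∧ y = bmap G rank f v)

/-- The auxiliary graph G_M^*. -/
def GMstar (f : V → Option V) : SimpleGraph (Vstar V) where
  Adj x y := x ≠ y ∧ (starRel G rank f x y ∨ starRel G rank f y x)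
  symm := ⟨fun x y h => ⟨h.1.symm, h.2.symm⟩⟩
  loopless := ⟨fun x h => h.1 rfl⟩

/-- The matching M viewed in G_M^*. -/
def fstar (f : V → Option V) : Vstar V → Option (Vstar V)
  | Sum.inl v => (f v).map Sum.inl
  | _ => none

/-- The dual objective of LP2. -/
def dualObj (α : V → ℝ) (y : Finset V → ℝ) : ℝ :=
  (∑ v, α v) +
    ∑ Z ∈ Finset.univ.filter (fun Z : Finset V => Odd Z.card), ((Z.card - 1 : ℝ) / 2) * y Z

/-- Feasibility for LP2, the dual of the fractional matching LP with odd set constraints. -/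
def DualFeasible (f : V → Option V) (α : V → ℝ) (y : Finset V → ℝ) : Prop :=
  (∀ v w, G.Adj v w →
    (wE rank f v w : ℝ) ≤ α v + α w +
      ∑ Z ∈ Finset.univ.filter (fun Z : Finset V => Odd Z.card ∧ v ∈ Z ∧ w ∈ Z), y Z) ∧
  (∀ v, (wL f v : ℝ) ≤ α v) ∧ (∀ Z, 0 ≤ y Z)

/-- A feasible solution of LP1: a fractional matching of G~ (loops allowed)
satisfying the odd-set constraints.  `x v v` is the value of the loop at v. -/
def PrimalFeasible (x : V → V → ℝ) : Prop :=
  (∀ v w, x v w = x w v) ∧ (∀ v w, 0 ≤ x v w) ∧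
  (∀ v w, v ≠ w → ¬ G.Adj v w → x v w = 0) ∧
  (∀ v, ∑ w, x v w = 1) ∧
  (∀ Z : Finset V, Odd Z.card →
    (∑ v ∈ Z, ∑ w ∈ Z, if v ≠ w then x v w else 0) ≤ (Z.card - 1 : ℝ))

/-- The w_M-value of a fractional matching x of G~. -/
def primalVal (f : V → Option V) (x : V → V → ℝ) : ℝ :=
  (∑ v, ∑ w, if v ≠ w then (wE rank f v w : ℝ) * x v w else 0) / 2 +
    ∑ v, (wL f v : ℝ) * x v v

/-- A fractional matching of G~ (no odd-set constraints). -/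
def FracMatching (x : V → V → ℝ) : Prop :=
  (∀ v w, x v w = x w v) ∧ (∀ v w, 0 ≤ x v w) ∧
  (∀ v w, v ≠ w → ¬ G.Adj v w → x v w = 0) ∧ (∀ v, ∑ w, x v w = 1)

/-- f is fractional popular ("truly popular"): no fractional matching has positive w_M-value. -/
def FracPopular (f : V → Option V) : Prop :=
  ∀ x, FracMatching G x → primalVal rank f x ≤ 0

/-- x is missed by some maximum matching of H (x is in the Gallai-Edmonds set D). -/
def Exposable {W : Type*} [Fintype W] (H : SimpleGraph W) (x : W) : Prop :=
  ∃ g, MaxMatchingOn H g ∧ g x = none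

/-- Reachability inside the set P by a walk of H. -/
def ReachWithin {W : Type*} (H : SimpleGraph W) (P : W → Prop) (x y : W) : Prop :=
  ∃ (p : ℕ → W) (n : ℕ), p 0 = x ∧ p n = y ∧ (∀ i, i ≤ n → P (p i)) ∧ ∀ i, i < n → H.Adj (p i) (p (i + 1))

/-- X: nodes of G_M^* reachable from blocking or star nodes on an alternating path. -/
def ReachX (f : V → Option V) (x : Vstar V) : Prop :=
  ∃ (p : ℕ → Vstar V) (n : ℕ), AltPath (GMstar G rank f) (fstar f) p n ∧
    (∃ v, IsBlockEnd G rank f v ∧ p 0 = bmap G rank f v) ∧ p n = x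

/-- K is a connected component of G_M^*[X ∩ D]. -/
def IsCompXD (f : V → Option V) (K : Finset (Vstar V)) : Prop :=
  K.Nonempty ∧
  (∀ x ∈ K, ReachX G rank f x ∧ Exposable (GMstar G rank f) x) ∧
  (∀ x ∈ K, ∀ y, ReachX G rank f y → Exposable (GMstar G rank f) y →
    (GMstar G rank f).Adj x y → y ∈ K) ∧
  (∀ x ∈ K, ∀ y ∈ K,
    ReachWithin (GMstar G rank f) (fun z => ReachX G rank f z ∧ Exposable (GMstar G rank f) z) x y)

/-- The α of the dual witness constructed from the Gallai-Edmonds decomposition of G_M^*. -/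
def alphaGE (f : V → Option V) (v : V) : ℝ :=
  if ReachX G rank f (origV v) ∧ Exposable (GMstar G rank f) (origV v) then -1
  else if ReachX G rank f (origV v) ∧ ¬ Exposable (GMstar G rank f) (origV v) ∧
      (∃ y, Exposable (GMstar G rank f) y ∧ (GMstar G rank f).Adj (origV v) y) then 1
  else 0

/-- The odd set of original nodes arising from a component K of G_M^*[X∩D]:
original members of K, with a star-node root replaced by the middle node of its star. -/
def ZofK (K : Finset (Vstar V)) : Finset V :=
  Finset.univ.filter (fun v => origV v ∈ K ∨ sNodeV v ∈ K)

/-- The y of the dual witness constructed from the Gallai-Edmonds decomposition. -/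
def yGE (f : V → Option V) (Z : Finset V) : ℝ :=
  if ∃ K, IsCompXD G rank f K ∧ 3 ≤ K.card ∧ Z = ZofK K then 2 else 0

end

section Aux

open Finset

variable {V : Type*} [Fintype V] [DecidableEq V]

lemma vote_nonzero' (G : SimpleGraph V) (rank : V → V → ℕ) (hstrict : StrictPrefs G rank)
    (f : V → Option V) (hM : IsMatchingOn G f) (u v : V) (hadj : G.Adj u v)
    (hne : f u ≠ some v) : vote rank u (some v) (f u) ≠ 0 := by
  unfold vote
  split_ifs with h1 h2
  · simp
  · simp
  · exfalso
    have heq : rkv rank u (some v) = rkv rank u (f u) := le_antisymm (not_lt.1 h2) (not_lt.1 h1)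
    cases hfu : f u with
    | none => rw [hfu] at heq; simp [rkv] at heq
    | some w =>
      rw [hfu] at heq
      simp only [rkv, Nat.cast_inj] at heq
      exact hne (by rw [hfu, hstrict u v w hadj (hM.2 u w hfu) heq])

lemma pair_le' (G : SimpleGraph V) (rank : V → V → ℕ) (hstrict : StrictPrefs G rank)
    (f : V → Option V) (hM : IsMatchingOn G f)
    (hstable : ∀ u v, ¬ BlockingEdge G rank f u v) (u v : V) (hadj : G.Adj u v) :
    vote rank u (some v) (f u) + vote rank v (some u) (f v) ≤ 0 := by
  by_cases hfu : f u = some v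
  · have hfv : f v = some u := hM.1 u v hfu
    simp [vote, hfu, hfv]
  · have hfv : f v ≠ some u := fun h => hfu (hM.1 v u h)
    have ha := vote_nonzero' G rank hstrict f hM u v hadj hfu
    have hb := vote_nonzero' G rank hstrict f hM v u hadj.symm hfv
    have hblock := hstable u v
    unfold BlockingEdge at hblock
    unfold vote at ha hb ⊢
    split_ifs at ha hb ⊢ with h1 h2 h3 h4 <;> try omega
    all_goals exact absurd ⟨hadj, hfu, by assumption, by assumption⟩ hblock

end Aux

/-- every stable matching is popular. -/
theorem stable_implies_popular {V : Type*} [Fintype V] [DecidableEq V]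
    (G : SimpleGraph V) (rank : V → V → ℕ) (hstrict : StrictPrefs G rank)
    (f : V → Option V) (hM : IsMatchingOn G f)
    (hstable : ∀ u v, ¬ BlockingEdge G rank f u v) :
    PopularM G rank f := by
  intro g hg hmp
  classical
  set h : V → ℤ := fun v => vote rank v (g v) (f v) with hh
  set S : Finset V := Finset.univ.filter (fun v => g v ≠ none) with hS
  set σ : V → V := fun v => (g v).getD v with hσ
  have hgv : ∀ v ∈ S, g v = some (σ v) := by
    intro v hv
    simp only [hS, Finset.mem_filter] at hv
    cases hgv : g v with
    | none => exact absurd hgv hv.2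
    | some w => simp [hσ, hgv]
  have hgσ : ∀ v ∈ S, g (σ v) = some v := fun v hv => hg.1 v (σ v) (hgv v hv)
  have hσS : ∀ v ∈ S, σ v ∈ S := by
    intro v hv
    simp only [hS, Finset.mem_filter]
    exact ⟨Finset.mem_univ _, by rw [hgσ v hv]; simp⟩
  have hσσ : ∀ v ∈ S, σ (σ v) = v := by
    intro v hv
    have := hgσ v hv
    have h1 : σ (σ v) = (g (σ v)).getD (σ v) := rfl
    rw [h1, this]
    rfl
  have hsumS : ∑ v ∈ S, h v ≤ 0 := by
    have hre : ∑ v ∈ S, h v = ∑ v ∈ S, h (σ v) :=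
      Finset.sum_nbij' σ σ hσS hσS hσσ hσσ (fun v hv => by simp only [hσσ v hv])
    have h2 : (2:ℤ) * ∑ v ∈ S, h v = ∑ v ∈ S, (h v + h (σ v)) := by
      rw [Finset.sum_add_distrib, two_mul, ← hre]
    have hle : ∑ v ∈ S, (h v + h (σ v)) ≤ 0 := by
      apply Finset.sum_nonpos
      intro v hv
      have e1 : h v = vote rank v (some (σ v)) (f v) := by simp [hh, hgv v hv]
      have e2 : h (σ v) = vote rank (σ v) (some v) (f (σ v)) := by simp [hh, hgσ v hv]
      rw [e1, e2]
      exact pair_le' G rank hstrict f hM hstable v (σ v) (hg.2 v (σ v) (hgv v hv))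
    linarith
  have hsum : ∑ v, h v ≤ 0 := by
    rw [← Finset.sum_filter_add_sum_filter_not Finset.univ (fun v => g v ≠ none) h]
    have hrest : ∑ v ∈ Finset.univ.filter (fun v => ¬ g v ≠ none), h v ≤ 0 := by
      apply Finset.sum_nonpos
      intro v hv
      simp only [Finset.mem_filter, not_not] at hv
      simp only [hh, vote, hv.2]
      split_ifs with h1 h2
      · exact absurd h1 (not_top_lt)
      · omega
      · omega
    calc ∑ v ∈ S, h v + ∑ v ∈ Finset.univ.filter (fun v => ¬ g v ≠ none), h v
        ≤ 0 + 0 := add_le_add hsumS hrest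
      _ = 0 := by ring
  have hcount : ∑ v, h v =
      ((Finset.univ.filter (fun v => rkv rank v (g v) < rkv rank v (f v))).card : ℤ)
      - ((Finset.univ.filter (fun v => rkv rank v (f v) < rkv rank v (g v))).card : ℤ) := by
    rw [Finset.card_filter, Finset.card_filter]
    push_cast
    rw [← Finset.sum_sub_distrib]
    apply Finset.sum_congr rfl
    intro v _
    simp only [hh, vote]
    split_ifs with h1 h2 h3 <;> first | omega | (exact absurd h2 (lt_asymm h1))
  have := hmp
  unfold MorePopular at this
  omega
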